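/- Let X be a non-complete connected regular graph admitting a collection C of maximal cliques such that every edge lies in exactly one clique of C and every vertex lies in exactly at most 2 cliques of C. Then X is isomorphic to the line graph L(Y) of some graph Y. -/

import Mathlib

open Finset

/-- A non-complete connected regular graph admitting a collection of maximal
cliques, such that every edge lies in exactly one of them and every vertex lies in at most
two of them, is a line graph. -/
theorem isLineGraph_of_clique_geometry {V : Type*} [Fintype V] [DecidableEq V]
    (X : SimpleGraph V) [DecidableRel X.Adj] (k : ℕ)
    (hconn : X.Connected) (hreg : X.IsRegularOfDegree k)
    (hnoncomplete : X ≠ ⊤)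
    (𝒞 : Finset (Finset V))
    (hclique : ∀ C ∈ 𝒞, X.IsClique (C : Set V))
    (hmax : ∀ C ∈ 𝒞, ∀ w : V, w ∉ C → ¬ X.IsClique (insert w (C : Set V)))
    (hedge : ∀ u v : V, X.Adj u v → ∃! C, C ∈ 𝒞 ∧ u ∈ C ∧ v ∈ C)
    (hvert : ∀ v : V, (𝒞.filter fun C => v ∈ C).card ≤ 2) :
    ∃ (W : Type) (Y : SimpleGraph W), Nonempty (X ≃g Y.lineGraph) := by
  classical
  -- every vertex has a neighbor
  have hnb : ∀ v : V, ∃ w, X.Adj v w := by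
    intro v
    by_contra hno
    push_neg at hno
    apply hnoncomplete
    have hall : ∀ u : V, u = v := by
      intro u
      obtain ⟨p⟩ := (hconn v u)
      cases p with
      | nil => rfl
      | cons h q => exact absurd h (hno _)
    ext a b
    simp only [SimpleGraph.top_adj]
    constructor
    · exact fun h => h.ne
    · intro h; exact absurd ((hall a).trans (hall b).symm) h
  -- distinct cliques meet in at most one point
  have hsep : ∀ C, C ∈ 𝒞 → ∀ D, D ∈ 𝒞 → C ≠ D →
      ∀ u v : V, u ∈ C → v ∈ C → u ∈ D → v ∈ D → u = v := by
    intro C hC D hD hCD u v huC hvC huD hvD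
    by_contra huv
    have hadj : X.Adj u v := hclique C hC huC hvC huv
    exact hCD ((hedge u v hadj).unique ⟨hC, huC, hvC⟩ ⟨hD, huD, hvD⟩)
  -- a vertex cannot lie in exactly one clique
  have hone : ∀ v : V, (𝒞.filter fun C => v ∈ C).card ≠ 1 := by
    intro v h1
    obtain ⟨C, hCeq⟩ := Finset.card_eq_one.mp h1
    have hCmem : C ∈ 𝒞.filter fun C => v ∈ C := by rw [hCeq]; exact Finset.mem_singleton_self C
    rw [Finset.mem_filter] at hCmem
    obtain ⟨hC𝒞, hvC⟩ := hCmem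
    have huniq : ∀ E, E ∈ 𝒞 → v ∈ E → E = C := by
      intro E hE hvE
      have : E ∈ 𝒞.filter fun C => v ∈ C := Finset.mem_filter.mpr ⟨hE, hvE⟩
      rw [hCeq, Finset.mem_singleton] at this
      exact this
    have hCeq2 : C = insert v (X.neighborFinset v) := by
      apply Finset.Subset.antisymm
      · intro u hu
        rcases eq_or_ne u v with rfl | hne
        · exact Finset.mem_insert_self _ _
        · refine Finset.mem_insert_of_mem ?_
          rw [SimpleGraph.mem_neighborFinset]
          exact hclique C hC𝒞 hvC hu hne.symm
      · intro u hu
        rcases Finset.mem_insert.mp hu with rfl | hu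
        · exact hvC
        · rw [SimpleGraph.mem_neighborFinset] at hu
          obtain ⟨E, ⟨hE, hvE, huE⟩, -⟩ := hedge v u hu
          rw [huniq E hE hvE] at huE
          exact huE
    have hcard : C.card = k + 1 := by
      rw [hCeq2, Finset.card_insert_of_notMem (by simp),
        SimpleGraph.card_neighborFinset_eq_degree, hreg v]
    have hclosed : ∀ a, a ∈ C → ∀ b, X.Adj a b → b ∈ C := by
      intro a ha b hab
      have hsub : C.erase a ⊆ X.neighborFinset a := by
        intro x hx
        rw [SimpleGraph.mem_neighborFinset]
        exact hclique C hC𝒞 ha (Finset.mem_of_mem_erase hx) (Finset.ne_of_mem_erase hx).symm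
      have heq : C.erase a = X.neighborFinset a := by
        apply Finset.eq_of_subset_of_card_le hsub
        rw [SimpleGraph.card_neighborFinset_eq_degree, hreg a, Finset.card_erase_of_mem ha, hcard]
        omega
      have : b ∈ C.erase a := by
        rw [heq, SimpleGraph.mem_neighborFinset]; exact hab
      exact Finset.mem_of_mem_erase this
    have key : ∀ (a b : V) (p : X.Walk a b), a ∈ C → b ∈ C := by
      intro a b p
      induction p with
      | nil => exact id
      | cons h q ih => intro ha; exact ih (hclosed _ ha _ h)
    have hall : ∀ u : V, u ∈ C := fun u => key v u (hconn v u).some hvC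
    apply hnoncomplete
    ext a b
    simp only [SimpleGraph.top_adj]
    constructor
    · exact fun h => h.ne
    · intro h; exact hclique C hC𝒞 (hall a) (hall b) h
  -- hence every vertex lies in exactly two cliques
  have h2 : ∀ v : V, ∃ C D : Finset V, C ∈ 𝒞 ∧ D ∈ 𝒞 ∧ C ≠ D ∧ v ∈ C ∧ v ∈ D ∧
      ∀ E, E ∈ 𝒞 → v ∈ E → E = C ∨ E = D := by
    intro v
    have h0 : (𝒞.filter fun C => v ∈ C).card ≠ 0 := by
      obtain ⟨w, hw⟩ := hnb v
      obtain ⟨E, ⟨hE, hvE, hwE⟩, -⟩ := hedge v w hw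
      have : E ∈ 𝒞.filter fun C => v ∈ C := Finset.mem_filter.mpr ⟨hE, hvE⟩
      exact Finset.card_ne_zero_of_mem this
    have htwo : (𝒞.filter fun C => v ∈ C).card = 2 := by
      have := hvert v; have := hone v; omega
    obtain ⟨C, D, hCD, hf⟩ := Finset.card_eq_two.mp htwo
    have hC : C ∈ 𝒞.filter fun C => v ∈ C := by rw [hf]; simp
    have hD : D ∈ 𝒞.filter fun C => v ∈ C := by rw [hf]; simp
    rw [Finset.mem_filter] at hC hD
    refine ⟨C, D, hC.1, hD.1, hCD, hC.2, hD.2, ?_⟩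
    intro E hE hvE
    have : E ∈ 𝒞.filter fun C => v ∈ C := Finset.mem_filter.mpr ⟨hE, hvE⟩
    rw [hf, Finset.mem_insert, Finset.mem_singleton] at this
    exact this
  choose Cf Df hCm hDm hne hvCf hvDf huniq using h2
  -- the graph Y on the clique set, re-indexed over `Fin 𝒞.card` to land in `Type 0`
  let e : {C : Finset V // C ∈ 𝒞} ≃ Fin 𝒞.card := 𝒞.equivFin
  refine ⟨Fin 𝒞.card,
    ⟨fun A B => A ≠ B ∧ ∃ x, x ∈ (e.symm A).1 ∧ x ∈ (e.symm B).1,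
      ⟨fun A B h => ⟨h.1.symm, h.2.imp fun x hx => ⟨hx.2, hx.1⟩⟩⟩,
      ⟨fun A h => h.1 rfl⟩⟩, ?_⟩
  set Y : SimpleGraph (Fin 𝒞.card) :=
    ⟨fun A B => A ≠ B ∧ ∃ x, x ∈ (e.symm A).1 ∧ x ∈ (e.symm B).1,
      ⟨fun A B h => ⟨h.1.symm, h.2.imp fun x hx => ⟨hx.2, hx.1⟩⟩⟩,
      ⟨fun A h => h.1 rfl⟩⟩ with hY
  have hedgemem : ∀ v : V, s(e ⟨Cf v, hCm v⟩, e ⟨Df v, hDm v⟩) ∈ Y.edgeSet := by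
    intro v
    rw [SimpleGraph.mem_edgeSet]
    refine ⟨fun h => hne v (congrArg Subtype.val (e.injective h)), v, ?_, ?_⟩
    · rw [Equiv.symm_apply_apply]; exact hvCf v
    · rw [Equiv.symm_apply_apply]; exact hvDf v
  set φ : V → Y.edgeSet := fun v => ⟨_, hedgemem v⟩ with hφ
  have hinj : Function.Injective φ := by
    intro u v huv
    rw [Subtype.ext_iff] at huv
    rcases Sym2.eq_iff.mp huv with ⟨h1, h2⟩ | ⟨h1, h2⟩
    · have e1 : Cf u = Cf v := congrArg Subtype.val (e.injective h1)
      have e2 : Df u = Df v := congrArg Subtype.val (e.injective h2)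
      exact hsep (Cf u) (hCm u) (Df u) (hDm u) (hne u) u v (hvCf u)
        (by rw [e1]; exact hvCf v) (hvDf u) (by rw [e2]; exact hvDf v)
    · have e1 : Cf u = Df v := congrArg Subtype.val (e.injective h1)
      have e2 : Df u = Cf v := congrArg Subtype.val (e.injective h2)
      exact hsep (Cf u) (hCm u) (Df u) (hDm u) (hne u) u v (hvCf u)
        (by rw [e1]; exact hvDf v) (hvDf u) (by rw [e2]; exact hvCf v)
  have hsurj : Function.Surjective φ := by
    rintro ⟨ed, he⟩
    induction ed using Sym2.ind with
    | _ A B =>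
      rw [SimpleGraph.mem_edgeSet] at he
      obtain ⟨hAB, x, hxA, hxB⟩ := he
      refine ⟨x, Subtype.ext ?_⟩
      show s(e ⟨Cf x, hCm x⟩, e ⟨Df x, hDm x⟩) = s(A, B)
      have h1 := huniq x (e.symm A).1 (e.symm A).2 hxA
      have h2 := huniq x (e.symm B).1 (e.symm B).2 hxB
      have conv : ∀ (i : Fin 𝒞.card) (C : Finset V) (hC : C ∈ 𝒞),
          (e.symm i).1 = C → i = e ⟨C, hC⟩ := by
        intro i C hC h
        subst h
        exact (e.apply_symm_apply i).symm
      rw [Sym2.eq_iff]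
      rcases h1 with h1 | h1 <;> rcases h2 with h2 | h2
      · exact absurd (by rw [conv A _ (hCm x) h1, conv B _ (hCm x) h2]) hAB
      · exact Or.inl ⟨(conv A _ (hCm x) h1).symm, (conv B _ (hDm x) h2).symm⟩
      · exact Or.inr ⟨(conv B _ (hCm x) h2).symm, (conv A _ (hDm x) h1).symm⟩
      · exact absurd (by rw [conv A _ (hDm x) h1, conv B _ (hDm x) h2]) hAB
  refine ⟨⟨Equiv.ofBijective φ ⟨hinj, hsurj⟩, ?_⟩⟩
  intro u v
  show Y.lineGraph.Adj (φ u) (φ v) ↔ X.Adj u v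
  rw [SimpleGraph.lineGraph_adj_iff_exists]
  constructor
  · rintro ⟨hne', w, hw1, hw2⟩
    have huv : u ≠ v := by rintro rfl; exact hne' rfl
    have hu : u ∈ (e.symm w).1 := by
      rcases Sym2.mem_iff.mp hw1 with rfl | rfl
      · rw [Equiv.symm_apply_apply]; exact hvCf u
      · rw [Equiv.symm_apply_apply]; exact hvDf u
    have hv : v ∈ (e.symm w).1 := by
      rcases Sym2.mem_iff.mp hw2 with rfl | rfl
      · rw [Equiv.symm_apply_apply]; exact hvCf v
      · rw [Equiv.symm_apply_apply]; exact hvDf v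
    exact hclique (e.symm w).1 (e.symm w).2 hu hv huv
  · intro h
    obtain ⟨E, ⟨hE, huE, hvE⟩, -⟩ := hedge u v h
    refine ⟨fun hh => h.ne (hinj hh), e ⟨E, hE⟩, ?_, ?_⟩
    · rcases huniq u E hE huE with h1 | h1
      · exact Sym2.mem_iff.mpr (Or.inl (congrArg e (Subtype.ext h1)))
      · exact Sym2.mem_iff.mpr (Or.inr (congrArg e (Subtype.ext h1)))
    · rcases huniq v E hE hvE with h1 | h1
      · exact Sym2.mem_iff.mpr (Or.inl (congrArg e (Subtype.ext h1)))
      · exact Sym2.mem_iff.mpr (Or.inr (congrArg e (Subtype.ext h1)))
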